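/- Let C_out ⊆ ℤ/q₁ℤ × ⋯ × ℤ/qₙℤ be an integer code with q_max = max_i qᵢ, let C_in ⊆ ℤ/ℓ₁ℤ × ⋯ × ℤ/ℓ_mℤ be an integer code with |C_in| ≥ q_max and locality r_in > 0, and let φ : {0,…,q_max−1} → C_in be injective. Then the concatenated code C_in ∘_φ C_out has locality r_in. -/

import Mathlib

/-- The weight of a set `I` of coordinates: the product of the moduli indexed by `I`. -/
def wtS {ι : Type} (q : ι → ℕ) (I : Finset ι) : ℕ := ∏ i ∈ I, q i

/-- The weighted distance between two vectors of `ℤ/q₁ℤ × ⋯ × ℤ/qₙℤ`. -/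
def wdist {ι : Type} [Fintype ι] (q : ι → ℕ) (a b : ∀ i : ι, ZMod (q i)) : ℕ :=
  ∏ i ∈ Finset.univ.filter (fun i => a i ≠ b i), q i

/-- The minimum weighted distance of an integer code `C ⊆ ℤ/q₁ℤ × ⋯ × ℤ/qₙℤ`. -/
noncomputable def minDist {ι : Type} [Fintype ι] (q : ι → ℕ)
    (C : Finset (∀ i : ι, ZMod (q i))) : ℕ :=
  sInf {d : ℕ | ∃ a ∈ C, ∃ b ∈ C, a ≠ b ∧ d = wdist q a b}

/-- `S` is a helper set for coordinate `i` in the code `C`: `i ∉ S` and any two codewords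
agreeing on all coordinates of `S` also agree at coordinate `i`. -/
def IsHelperSet {ι : Type} (q : ι → ℕ) (C : Finset (∀ i : ι, ZMod (q i)))
    (i : ι) (S : Finset ι) : Prop :=
  i ∉ S ∧ ∀ a ∈ C, ∀ b ∈ C, (∀ j ∈ S, a j = b j) → a i = b i

/-- Coordinate `i` has locality `r` in `C`: some helper set `S` for `i` has `wt(S) ≤ (q i)^r`. -/
def HasLocalityAt {ι : Type} (q : ι → ℕ) (C : Finset (∀ i : ι, ZMod (q i)))
    (i : ι) (r : ℝ) : Prop :=
  ∃ S : Finset ι, IsHelperSet q C i S ∧ (wtS q S : ℝ) ≤ (q i : ℝ) ^ r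

/-- The code `C` has locality `r`: every coordinate has locality `r` in `C`. -/
def CodeHasLocality {ι : Type} (q : ι → ℕ) (C : Finset (∀ i : ι, ZMod (q i))) (r : ℝ) : Prop :=
  ∀ i, HasLocalityAt q C i r

/-- The concatenation of an outer integer code `Cout ⊆ ℤ/q₁ℤ × ⋯ × ℤ/qₙℤ` with an inner
integer code through an encoding map `φ`: each outer symbol `c i` (identified with its
representative `(c i).val ∈ {0, …, qᵢ - 1}`) is replaced by the inner codeword
`φ ((c i).val)`.  The result is an integer code indexed by `ι × κ`, whose modulus at
position `(i, j)` is `ℓ j`. -/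
def concatCode {ι κ : Type} [Fintype ι] [DecidableEq ι] [Fintype κ] [DecidableEq κ]
    (q : ι → ℕ) (ℓ : κ → ℕ) (Cout : Finset (∀ i : ι, ZMod (q i)))
    (φ : ℕ → ∀ j : κ, ZMod (ℓ j)) :
    Finset (∀ p : ι × κ, ZMod (ℓ p.2)) :=
  Cout.image (fun c p => φ ((c p.1).val) p.2)

/-- If the inner code has locality `r_in`, then the concatenated code has locality
`r_in`. -/
theorem statement17 {n m : ℕ} (hn : 1 ≤ n) (hm : 1 ≤ m)
    (q : Fin n → ℕ) (hq : ∀ i, 2 ≤ q i) (ℓ : Fin m → ℕ) (hℓ : ∀ j, 2 ≤ ℓ j)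
    (qmax : ℕ) (hqmax : qmax = Finset.univ.sup q)
    (Cout : Finset (∀ i : Fin n, ZMod (q i)))
    (Cin : Finset (∀ j : Fin m, ZMod (ℓ j))) (hCin : qmax ≤ Cin.card)
    (φ : ℕ → ∀ j : Fin m, ZMod (ℓ j))
    (hφmem : ∀ k < qmax, φ k ∈ Cin)
    (hφinj : ∀ k < qmax, ∀ k' < qmax, φ k = φ k' → k = k')
    (rin : ℝ) (hrin : 0 < rin) (hloc : CodeHasLocality ℓ Cin rin) :
    CodeHasLocality (fun p : Fin n × Fin m => ℓ p.2) (concatCode q ℓ Cout φ) rin := by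
  rintro ⟨i, j⟩
  obtain ⟨S, ⟨hjS, hagree⟩, hwt⟩ := hloc j
  refine ⟨{i} ×ˢ S, ⟨?_, ?_⟩, ?_⟩
  · simp [hjS]
  · rintro a ha b hb hab
    simp only [concatCode, Finset.mem_image] at ha hb
    obtain ⟨c, hc, rfl⟩ := ha
    obtain ⟨c', hc', rfl⟩ := hb
    haveI : NeZero (q i) := ⟨by have := hq i; omega⟩
    have hval : (c i).val < qmax := lt_of_lt_of_le (ZMod.val_lt _)
      (hqmax ▸ Finset.le_sup (Finset.mem_univ i))
    have hval' : (c' i).val < qmax := lt_of_lt_of_le (ZMod.val_lt _)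
      (hqmax ▸ Finset.le_sup (Finset.mem_univ i))
    exact hagree _ (hφmem _ hval) _ (hφmem _ hval') fun j' hj' =>
      hab (i, j') (by simp [hj'])
  · calc (wtS (fun p : Fin n × Fin m => ℓ p.2) ({i} ×ˢ S) : ℝ)
        = (wtS ℓ S : ℝ) := by
          simp [wtS, Finset.prod_product]
      _ ≤ _ := hwt
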